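/- arXiv:1902.01241 — 2 statements merged into one kernel-verified Lean document; each statement's English description precedes it below -/
import Mathlib

section
/- Let (P_n(x;t))_{n≥0} and (R_n(x;t))_{n≥0} be two sequences in Λ_n ⊗ ℤ[t] (homogeneous symmetric functions of degree n with polynomial coefficients in t) both satisfying: (i) the 0-th term equals 1; (ii) for n ≥ 1 the degree in t is less than (n+1)/2; and (iii) the functional equation t^{n+1} F_n(x; t^{-1}) = (t-1) Σ_{ℓ=0}^{n} h_ℓ[(t-2)X] h_{n-ℓ}(x) + Σ_{i+j+m=n} F_i(x;t) h_j[(t-1)X] h_m[(t-1)X] for all n ≥ 1. Then P_n = R_n for all n. -/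
open Finset Polynomial


lemma reflect_fixed_eq_zero {S : Type*} [CommRing S] {N : ℕ} {p : Polynomial S}
    (hrefl : Polynomial.reflect N p = p) (hdeg : 2 * p.natDegree < N) : p = 0 := by
  by_contra hp
  have hd : p.coeff p.natDegree ≠ 0 := Polynomial.leadingCoeff_ne_zero.mpr hp
  have h1 : p.coeff (N - p.natDegree) = p.coeff p.natDegree := by
    have h0 := Polynomial.coeff_reflect N p (N - p.natDegree)
    rw [hrefl, Polynomial.revAt_le (Nat.sub_le _ _), Nat.sub_sub_self (by omega)] at h0
    exact h0
  have h2 : p.coeff (N - p.natDegree) = 0 :=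
    Polynomial.coeff_eq_zero_of_natDegree_lt (by omega)
  exact hd (h1 ▸ h2)

/-- **Uniqueness of the sequence `P_n(x;t)`.**  Work over an abstract ring `S` of symmetric
functions; `h m = h_m(x)`, and `w j = h_j[(t-2)X]`, `g j = h_j[(t-1)X]` are the plethysms,
which are polynomials in `t` with symmetric-function coefficients (with `g 0 = h_0[(t-1)X] = 1`).
If two sequences `P, R : ℕ → S[t]` both satisfy (i) the 0-th term is `1`, (ii) for `n ≥ 1` the
`t`-degree is less than `(n+1)/2`, and (iii) for `n ≥ 1` the functional equation
`t^{n+1} F_n(t⁻¹) = (t-1) ∑_{ℓ=0}^n h_ℓ[(t-2)X] h_{n-ℓ} + ∑_{i+j+m=n} F_i h_j[(t-1)X] h_m[(t-1)X]`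
(where `t^{n+1} F_n(t⁻¹)` is the reversal `reflect (n+1) F_n`), then `P = R`. -/
theorem uniqueness_of_P {S : Type*} [CommRing S]
    (h : ℕ → S) (w g : ℕ → Polynomial S) (hg0 : g 0 = 1)
    (P R : ℕ → Polynomial S)
    (hP0 : P 0 = 1) (hR0 : R 0 = 1)
    (hPdeg : ∀ n, 1 ≤ n → 2 * (P n).natDegree < n + 1)
    (hRdeg : ∀ n, 1 ≤ n → 2 * (R n).natDegree < n + 1)
    (hPeq : ∀ n, 1 ≤ n →
      reflect (n + 1) (P n) =
        (X - 1) * ∑ l ∈ range (n + 1), w l * C (h (n - l)) +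
          ∑ i ∈ range (n + 1), ∑ j ∈ range (n + 1 - i), P i * g j * g (n - i - j))
    (hReq : ∀ n, 1 ≤ n →
      reflect (n + 1) (R n) =
        (X - 1) * ∑ l ∈ range (n + 1), w l * C (h (n - l)) +
          ∑ i ∈ range (n + 1), ∑ j ∈ range (n + 1 - i), R i * g j * g (n - i - j)) :
    P = R := by
  funext n
  induction n using Nat.strong_induction_on with
  | _ n ih =>
    rcases Nat.eq_zero_or_pos n with h0 | h1
    · rw [h0, hP0, hR0]
    · have hL : reflect (n+1) (P n - R n) = reflect (n+1) (P n) - reflect (n+1) (R n) := by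
        ext k; simp [coeff_reflect]
      have hsub : reflect (n+1) (P n - R n) = P n - R n := by
        rw [hL, hPeq n h1, hReq n h1]
        rw [add_sub_add_left_eq_sub, ← Finset.sum_sub_distrib, Finset.sum_range_succ]
        have hz : ∀ i ∈ range n,
            ((∑ j ∈ range (n + 1 - i), P i * g j * g (n - i - j)) -
              ∑ j ∈ range (n + 1 - i), R i * g j * g (n - i - j)) = 0 := by
          intro i hi
          rw [ih i (mem_range.mp hi), sub_self]
        rw [Finset.sum_eq_zero hz, zero_add]
        simp [hg0]
      have hdeg : 2 * (P n - R n).natDegree < n + 1 := by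
        have := Polynomial.natDegree_sub_le (P n) (R n)
        have h1' := hPdeg n h1
        have h2' := hRdeg n h1
        omega
      have := reflect_fixed_eq_zero hsub hdeg
      exact sub_eq_zero.mp this
end

section
/- Suppose ψ(t,u) satisfies the functional equation (1/u + ψ(t^{-1}, tu)) H(u) - (1/u + h_1) = (1/(tu) + ψ(t,u)) H(tu) - (1/(tu) + h_1), and define ρ(t,u) = u H(u)(1 + t u ψ(t,u)). Then ρ satisfies ρ(t^{-1}, tu) = (t-1) u H(tu)/H(u) + (H(tu)^2/H(u)^2) ρ(t,u). -/
/-- **Lemma on `ρ`.**  Work in the ring of formal power series in `u` over symmetric functions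
localized at `t` (abstracted as a commutative ring `A`), with `u`, `t` and `H₁ = H(u)` invertible,
and with `H₂ = H(tu)`, `h₁ = h_1`, `ψ₁ = ψ(t,u)`, `ψ₂ = ψ(t⁻¹,tu)`.  If
`(1/u + ψ(t⁻¹,tu)) H(u) - (1/u + h₁) = (1/(tu) + ψ(t,u)) H(tu) - (1/(tu) + h₁)`,
then `ρ(t,u) := u H(u)(1 + t u ψ(t,u))` satisfies
`ρ(t⁻¹,tu) = (t-1) u H(tu)/H(u) + (H(tu)²/H(u)²) ρ(t,u)`,
where `ρ(t⁻¹,tu) = tu H(tu)(1 + u ψ(t⁻¹,tu))`. -/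
theorem rho_functional_equation {A : Type*} [CommRing A] (u t H1 : Aˣ) (H2 h1 psi1 psi2 : A)
    (hyp : ((↑u⁻¹ : A) + psi2) * ↑H1 - ((↑u⁻¹ : A) + h1) =
        ((↑(t * u)⁻¹ : A) + psi1) * H2 - ((↑(t * u)⁻¹ : A) + h1)) :
    ↑t * ↑u * H2 * (1 + ↑u * psi2) =
      (↑t - 1) * ↑u * H2 * ↑H1⁻¹ +
        H2 ^ 2 * (↑H1⁻¹ : A) ^ 2 * (↑u * ↑H1 * (1 + ↑t * ↑u * psi1)) := by
  have hu : (↑u⁻¹ : A) * ↑u = 1 := u.inv_mul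
  have ht : (↑(t*u)⁻¹ : A) * (↑t * ↑u) = 1 := by
    rw [← Units.val_mul t u]; exact (t*u).inv_mul
  have hH : (↑H1⁻¹ : A) * ↑H1 = 1 := H1.inv_mul
  linear_combination (↑t * ↑u^2 * H2 * (↑H1⁻¹:A)) * hyp
    + (↑t*↑u*H2*(↑H1⁻¹:A) - ↑t*↑u*H2) * hu
    + (↑u*H2^2*(↑H1⁻¹:A) - ↑u*H2*(↑H1⁻¹:A)) * ht
    + (-(↑t*↑u^2*H2*psi2) - ↑t*↑u^2*H2^2*(↑H1⁻¹:A)*psi1 - ↑t*↑u^2*H2*(↑u⁻¹:A) - ↑u*H2^2*(↑H1⁻¹:A)) * hH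
end
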